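/- Let ã, b̃, c̃, d̃ > 0, p̃ ∈ (4, ∞), q̃ ∈ (0, 2), and set K = 8(4−q̃)/(p̃(p̃−2)(p̃−q̃)). Assume that (K^{(4−q̃)/(p̃−4)} − K^{(p̃−q̃)/(p̃−4)}) · [ (ã/d̃)·(b̃/c̃)^{(2−q̃)/(p̃−4)} + (1/d̃)·b̃^{(p̃−q̃)/(p̃−4)} / c̃^{(4−q̃)/(p̃−4)} ] > 1. Then there exist 0 < t₁ < t₂ such that f(t) = ã t² + b̃ t⁴ − c̃ t^{p̃} − d̃ t^{q̃} is strictly decreasing on [0, t₁], strictly increasing on [t₁, t₂], and strictly decreasing on [t₂, ∞), with f(t₁) < 0 < f(t₂); in particular t₁ and t₂ are the only critical points of f in (0, ∞). -/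

import Mathlib

open Real

set_option maxHeartbeats 400000


private lemma stmt1_fderiv (a b c d p q t : ℝ) (ht : 0 < t) :
    HasDerivAt (fun t : ℝ => a*t^2 + b*t^4 - c*t^p - d*t^q)
      (t^(q-1) * (2*a*t^(2-q) + 4*b*t^(4-q) - c*p*t^(p-q) - d*q)) t := by
  have h2 := (hasDerivAt_pow 2 t).const_mul a
  have h4 := (hasDerivAt_pow 4 t).const_mul b
  have hpp := (Real.hasDerivAt_rpow_const (x := t) (p := p) (Or.inl ht.ne')).const_mul c
  have hqq := (Real.hasDerivAt_rpow_const (x := t) (p := q) (Or.inl ht.ne')).const_mul d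
  have h := ((h2.add h4).sub hpp).sub hqq
  refine h.congr_deriv (Eq.symm ?_)
  have e1 : t^(q-1) * t^(2-q) = t := by
    rw [← Real.rpow_add ht, show q-1+(2-q) = 1 by ring, Real.rpow_one]
  have e2 : t^(q-1) * t^(4-q) = t^(3:ℕ) := by
    rw [← Real.rpow_add ht, show q-1+(4-q) = ((3:ℕ):ℝ) by norm_num, Real.rpow_natCast]
  have e3 : t^(q-1) * t^(p-q) = t^(p-1) := by
    rw [← Real.rpow_add ht, show q-1+(p-q) = p-1 by ring]
  have : t^(q-1) * (2*a*t^(2-q) + 4*b*t^(4-q) - c*p*t^(p-q) - d*q)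
      = 2*a*(t^(q-1)*t^(2-q)) + 4*b*(t^(q-1)*t^(4-q)) - c*p*(t^(q-1)*t^(p-q)) - d*q*t^(q-1) := by
    ring
  rw [this, e1, e2, e3]
  push_cast
  ring

private lemma stmt1_gderiv (a b c d p q t : ℝ) (ht : 0 < t) :
    HasDerivAt (fun t : ℝ => 2*a*t^(2-q) + 4*b*t^(4-q) - c*p*t^(p-q) - d*q)
      (t^(1-q) * (2*a*(2-q) + 4*b*(4-q)*t^2 - c*p*(p-q)*t^(p-2))) t := by
  have h1 := (Real.hasDerivAt_rpow_const (x := t) (p := 2-q) (Or.inl ht.ne')).const_mul (2*a)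
  have h2 := (Real.hasDerivAt_rpow_const (x := t) (p := 4-q) (Or.inl ht.ne')).const_mul (4*b)
  have h3 := (Real.hasDerivAt_rpow_const (x := t) (p := p-q) (Or.inl ht.ne')).const_mul (c*p)
  have h := ((h1.add h2).sub h3).sub_const (d*q)
  refine h.congr_deriv (Eq.symm ?_)
  have e1 : t^(1-q) = t^(2-q-1) := by rw [show (2-q-1:ℝ) = 1-q by ring]
  have e2 : t^(1-q) * t^(2:ℕ) = t^(4-q-1) := by
    rw [← Real.rpow_natCast t 2, ← Real.rpow_add ht, show 1-q+(2:ℕ) = 4-q-1 by push_cast; ring]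
  have e3 : t^(1-q) * t^(p-2) = t^(p-q-1) := by
    rw [← Real.rpow_add ht, show 1-q+(p-2) = p-q-1 by ring]
  have : t^(1-q) * (2*a*(2-q) + 4*b*(4-q)*t^2 - c*p*(p-q)*t^(p-2))
      = 2*a*((2-q)*t^(1-q)) + 4*b*((4-q)*(t^(1-q)*t^(2:ℕ))) - c*p*((p-q)*(t^(1-q)*t^(p-2))) := by
    ring
  rw [this, e2, e3, e1]

private lemma stmt1_phideriv (a b c p q t : ℝ) (ht : 0 < t) :
    HasDerivAt (fun t : ℝ => 2*a*(2-q) + 4*b*(4-q)*t^2 - c*p*(p-q)*t^(p-2))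
      (t * (8*b*(4-q) - c*p*(p-q)*(p-2)*t^(p-4))) t := by
  have h2 := (hasDerivAt_pow 2 t).const_mul (4*b*(4-q))
  have h3 := (Real.hasDerivAt_rpow_const (x := t) (p := p-2) (Or.inl ht.ne')).const_mul (c*p*(p-q))
  have h := ((hasDerivAt_const t (2*a*(2-q))).add h2).sub h3
  refine h.congr_deriv (Eq.symm ?_)
  have e3 : t * t^(p-4) = t^(p-2-1) := by
    nth_rewrite 1 [← Real.rpow_one t]
    rw [← Real.rpow_add ht, show 1+(p-4) = p-2-1 by ring]
  have : t * (8*b*(4-q) - c*p*(p-q)*(p-2)*t^(p-4))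
      = 8*b*(4-q)*t - c*p*(p-q)*((p-2)*(t*t^(p-4))) := by ring
  rw [this, e3]
  push_cast
  ring

private lemma stmt1_contf (a b c d p q : ℝ) (hp : 0 < p) (hq : 0 < q) :
    Continuous (fun t : ℝ => a*t^2 + b*t^4 - c*t^p - d*t^q) := by
  rw [continuous_iff_continuousAt]
  intro t
  have hP : ContinuousAt (fun t : ℝ => t^p) t := by
    rcases eq_or_ne t 0 with rfl | h
    · exact Real.continuousAt_rpow_const 0 p (Or.inr hp.le)
    · exact Real.continuousAt_rpow_const t p (Or.inl h)
  have hQ : ContinuousAt (fun t : ℝ => t^q) t := by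
    rcases eq_or_ne t 0 with rfl | h
    · exact Real.continuousAt_rpow_const 0 q (Or.inr hq.le)
    · exact Real.continuousAt_rpow_const t q (Or.inl h)
  exact ((((continuous_const.mul (continuous_pow 2)).continuousAt).add
      ((continuous_const.mul (continuous_pow 4)).continuousAt)).sub
      (continuousAt_const.mul hP)).sub (continuousAt_const.mul hQ)

private lemma stmt1_contg (a b c d p q t : ℝ) (ht : t ≠ 0) :
    ContinuousAt (fun t : ℝ => 2*a*t^(2-q) + 4*b*t^(4-q) - c*p*t^(p-q) - d*q) t := by
  have h1 := Real.continuousAt_rpow_const t (2-q) (Or.inl ht)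
  have h2 := Real.continuousAt_rpow_const t (4-q) (Or.inl ht)
  have h3 := Real.continuousAt_rpow_const t (p-q) (Or.inl ht)
  exact (((continuousAt_const.mul h1).add (continuousAt_const.mul h2)).sub
    (continuousAt_const.mul h3)).sub continuousAt_const

private lemma stmt1_contphi (a b c p q : ℝ) (hp : 2 < p) :
    Continuous (fun t : ℝ => 2*a*(2-q) + 4*b*(4-q)*t^2 - c*p*(p-q)*t^(p-2)) := by
  rw [continuous_iff_continuousAt]
  intro t
  have hP : ContinuousAt (fun t : ℝ => t^(p-2)) t := by
    rcases eq_or_ne t 0 with rfl | h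
    · exact Real.continuousAt_rpow_const 0 (p-2) (Or.inr (by linarith))
    · exact Real.continuousAt_rpow_const t (p-2) (Or.inl h)
  exact (continuousAt_const.add ((continuous_const.mul (continuous_pow 2)).continuousAt)).sub
    (continuousAt_const.mul hP)

/-- under the same largeness condition as in Statement 0, there exist
`0 < t₁ < t₂` such that `f` is strictly decreasing on `[0,t₁]`, strictly increasing on
`[t₁,t₂]`, strictly decreasing on `[t₂,∞)`, with `f(t₁) < 0 < f(t₂)`; and `t₁, t₂` are
exactly the critical points of `f` in `(0,∞)`. -/
theorem stmt_1 (a b c d p q : ℝ) (ha : 0 < a) (hb : 0 < b) (hc : 0 < c) (hd : 0 < d)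
    (hp : 4 < p) (hq0 : 0 < q) (hq2 : q < 2)
    (K : ℝ) (hK : K = 8 * (4 - q) / (p * (p - 2) * (p - q)))
    (hcond : (K ^ ((4 - q) / (p - 4)) - K ^ ((p - q) / (p - 4))) *
      ((a / d) * (b / c) ^ ((2 - q) / (p - 4)) +
        (1 / d) * b ^ ((p - q) / (p - 4)) / c ^ ((4 - q) / (p - 4))) > 1)
    (f : ℝ → ℝ) (hf : ∀ t, f t = a * t ^ 2 + b * t ^ 4 - c * t ^ p - d * t ^ q) :
    ∃ t₁ t₂ : ℝ, 0 < t₁ ∧ t₁ < t₂ ∧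
      StrictAntiOn f (Set.Icc 0 t₁) ∧
      StrictMonoOn f (Set.Icc t₁ t₂) ∧
      StrictAntiOn f (Set.Ici t₂) ∧
      f t₁ < 0 ∧ 0 < f t₂ ∧
      (∀ t, 0 < t → (deriv f t = 0 ↔ t = t₁ ∨ t = t₂)) := by
  have hfe : f = fun t => a * t ^ 2 + b * t ^ 4 - c * t ^ p - d * t ^ q := funext hf
  subst hfe
  clear hf
  -- numeric basics
  have hp4 : (0:ℝ) < p - 4 := by linarith
  have hp2 : (0:ℝ) < p - 2 := by linarith
  have hp0 : (0:ℝ) < p := by linarith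
  have h4q : (0:ℝ) < 4 - q := by linarith
  have h2q : (0:ℝ) < 2 - q := by linarith
  have hpq : (0:ℝ) < p - q := by linarith
  have hDpos : 0 < p*(p-2)*(p-q) := by positivity
  have hKid : p*(p-2)*(p-q)*K = 8*(4-q) := by rw [hK]; field_simp
  have hK0 : 0 < K := by nlinarith [hKid, hDpos, h4q]
  have h8 : (8:ℝ) < p*(p-2) := by nlinarith
  have hm1 : 8*(4-q) < p*(p-2)*(p-q) := by
    nlinarith [mul_pos (show (0:ℝ) < p*(p-2)-8 by linarith) h4q,
      mul_pos (mul_pos hp0 hp2) hp4]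
  have hK1 : K < 1 := by nlinarith [hKid, hm1, hDpos]
  have hKpq : K*(p-q) < 4-q := by nlinarith [hKid, h8, h4q, mul_pos hp0 hp2]
  have hKp2 : p*(p-q)*K < 4*(4-q) := by nlinarith [hKid, hp2, h4q, mul_pos h4q hp2]
  have hbc : (0:ℝ) < b/c := div_pos hb hc
  -- the condition, massaged (literal form)
  have hD : d < K^((4-q)/(p-4))*(1-K)*(a*(b/c)^((2-q)/(p-4)) + b*(b/c)^((4-q)/(p-4))) := by
    have hβ : (p-q)/(p-4) = 1 + (4-q)/(p-4) := by field_simp; ring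
    have hbβ : b^((p-q)/(p-4)) = b*b^((4-q)/(p-4)) := by
      rw [hβ, Real.rpow_add hb, Real.rpow_one]
    have hKβ : K^((p-q)/(p-4)) = K*K^((4-q)/(p-4)) := by
      rw [hβ, Real.rpow_add hK0, Real.rpow_one]
    have hYd : (b/c)^((4-q)/(p-4)) = b^((4-q)/(p-4))/c^((4-q)/(p-4)) :=
      Real.div_rpow hb.le hc.le _
    have hcα : 0 < c^((4-q)/(p-4)) := rpow_pos_of_pos hc _
    rw [hKβ, hbβ] at hcond
    have key : (K^((4-q)/(p-4)) - K*K^((4-q)/(p-4))) *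
        ((a/d)*(b/c)^((2-q)/(p-4)) + (1/d)*(b*b^((4-q)/(p-4)))/c^((4-q)/(p-4)))
        = (K^((4-q)/(p-4))*(1-K)*(a*(b/c)^((2-q)/(p-4)) + b*(b/c)^((4-q)/(p-4))))/d := by
      rw [hYd]; field_simp
    rw [gt_iff_lt, key] at hcond
    exact (one_lt_div hd).mp hcond
  -- opaque abbreviations
  obtain ⟨X, hXdef⟩ : ∃ x : ℝ, x = (b/c) ^ ((2-q)/(p-4)) := ⟨_, rfl⟩
  obtain ⟨Y, hYdef⟩ : ∃ x : ℝ, x = (b/c) ^ ((4-q)/(p-4)) := ⟨_, rfl⟩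
  obtain ⟨KA, hKAdef⟩ : ∃ x : ℝ, x = K ^ ((4-q)/(p-4)) := ⟨_, rfl⟩
  obtain ⟨KG, hKGdef⟩ : ∃ x : ℝ, x = K ^ ((2-q)/(p-4)) := ⟨_, rfl⟩
  rw [← hXdef, ← hYdef, ← hKAdef] at hD
  have hX : 0 < X := hXdef ▸ rpow_pos_of_pos hbc _
  have hY : 0 < Y := hYdef ▸ rpow_pos_of_pos hbc _
  have hKApos : 0 < KA := hKAdef ▸ rpow_pos_of_pos hK0 _
  have hKGpos : 0 < KG := hKGdef ▸ rpow_pos_of_pos hK0 _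
  -- the test point t₀
  have hKbc : 0 < K*(b/c) := mul_pos hK0 hbc
  obtain ⟨t₀, ht₀def⟩ : ∃ x : ℝ, x = (K*(b/c)) ^ ((p-4)⁻¹) := ⟨_, rfl⟩
  have ht₀pos : 0 < t₀ := ht₀def ▸ rpow_pos_of_pos hKbc _
  have ht₀r : ∀ r : ℝ, t₀ ^ r = K^(r/(p-4)) * (b/c)^(r/(p-4)) := by
    intro r
    rw [ht₀def, ← Real.rpow_mul hKbc.le, show (p-4)⁻¹*r = r/(p-4) by ring,
      Real.mul_rpow hK0.le hbc.le]
  have e2q : t₀^(2-q) = KG * X := by rw [ht₀r (2-q), hKGdef, hXdef]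
  have e4q : t₀^(4-q) = KA * Y := by rw [ht₀r (4-q), hKAdef, hYdef]
  have ep4 : t₀^(p-4) = K*(b/c) := by
    rw [ht₀def]; exact Real.rpow_inv_rpow hKbc.le (ne_of_gt hp4)
  -- key comparison
  have hGA : KA*(1-K) < KG := by
    have h1 : KA < KG := by
      rw [hKAdef, hKGdef]
      exact Real.rpow_lt_rpow_of_exponent_gt hK0 hK1
        (div_lt_div_of_pos_right (by linarith) hp4)
    linarith [h1, mul_pos hKApos hK0]
  -- Φ and g
  obtain ⟨Φ, hΦdef⟩ : ∃ F : ℝ → ℝ,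
      F = fun t => 2*a*(2-q) + 4*b*(4-q)*t^2 - c*p*(p-q)*t^(p-2) := ⟨_, rfl⟩
  obtain ⟨g, hgdef⟩ : ∃ F : ℝ → ℝ,
      F = fun t => 2*a*t^(2-q) + 4*b*t^(4-q) - c*p*t^(p-q) - d*q := ⟨_, rfl⟩
  have hΦcont : Continuous Φ := by rw [hΦdef]; exact stmt1_contphi a b c p q (by linarith)
  have hgcont : ∀ t : ℝ, t ≠ 0 → ContinuousAt g t := by
    intro t ht; rw [hgdef]; exact stmt1_contg a b c d p q t ht
  have hΦd : ∀ t : ℝ, 0 < t →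
      HasDerivAt Φ (t * (8*b*(4-q) - c*p*(p-q)*(p-2)*t^(p-4))) t := by
    intro t ht; rw [hΦdef]; exact stmt1_phideriv a b c p q t ht
  have hgd : ∀ t : ℝ, 0 < t → HasDerivAt g (t^(1-q) * Φ t) t := by
    intro t ht; rw [hgdef, hΦdef]; exact stmt1_gderiv a b c d p q t ht
  have hFd : ∀ t : ℝ, 0 < t →
      deriv (fun t => a * t ^ 2 + b * t ^ 4 - c * t ^ p - d * t ^ q) t = t^(q-1) * g t := by
    intro t ht; rw [hgdef]; exact (stmt1_fderiv a b c d p q t ht).deriv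
  -- identity used for Φ' sign
  have hId2 : c*p*(p-q)*(p-2)*(K*(b/c)) = 8*b*(4-q) := by
    field_simp
    linear_combination hKid
  -- Φ monotonicity
  have hΦdpos : ∀ t : ℝ, 0 < t → t < t₀ → 0 < deriv Φ t := by
    intro t ht htt
    rw [(hΦd t ht).deriv]
    have h1 : t^(p-4) < t₀^(p-4) := Real.rpow_lt_rpow ht.le htt hp4
    rw [ep4] at h1
    have h2 : c*p*(p-q)*(p-2)*t^(p-4) < 8*b*(4-q) := by
      calc c*p*(p-q)*(p-2)*t^(p-4) < c*p*(p-q)*(p-2)*(K*(b/c)) := by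
            apply mul_lt_mul_of_pos_left h1; positivity
        _ = 8*b*(4-q) := hId2
    exact mul_pos ht (by linarith)
  have hΦdneg : ∀ t : ℝ, t₀ < t → deriv Φ t < 0 := by
    intro t htt
    have ht : 0 < t := ht₀pos.trans htt
    rw [(hΦd t ht).deriv]
    have h1 : t₀^(p-4) < t^(p-4) := Real.rpow_lt_rpow ht₀pos.le htt hp4
    rw [ep4] at h1
    have h2 : 8*b*(4-q) < c*p*(p-q)*(p-2)*t^(p-4) := by
      calc (8:ℝ)*b*(4-q) = c*p*(p-q)*(p-2)*(K*(b/c)) := hId2.symm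
        _ < c*p*(p-q)*(p-2)*t^(p-4) := by
            apply mul_lt_mul_of_pos_left h1; positivity
    exact mul_neg_of_pos_of_neg ht (by linarith)
  have hΦmono : StrictMonoOn Φ (Set.Icc 0 t₀) :=
    strictMonoOn_of_deriv_pos (convex_Icc _ _) hΦcont.continuousOn
      (fun x hx => by rw [interior_Icc] at hx; exact hΦdpos x hx.1 hx.2)
  have hΦanti : StrictAntiOn Φ (Set.Ici t₀) :=
    strictAntiOn_of_deriv_neg (convex_Ici _) hΦcont.continuousOn
      (fun x hx => by rw [interior_Ici] at hx; exact hΦdneg x hx)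
  -- values of Φ
  have hΦ0 : Φ 0 = 2*a*(2-q) := by
    rw [hΦdef]
    simp [Real.zero_rpow (show p-2 ≠ 0 by linarith)]
  have hΦt₀ : 0 < Φ t₀ := by
    have en : t₀^(2:ℕ) = t₀^((2:ℝ)) := by
      rw [← Real.rpow_natCast t₀ 2]; norm_num
    have ep2 : t₀^(p-2) = t₀^((2:ℝ)) * (K*(b/c)) := by
      rw [show p-2 = (2:ℝ)+(p-4) by ring, Real.rpow_add ht₀pos, ep4]
    have hval : Φ t₀ = 2*a*(2-q) + (4*(4-q) - p*(p-q)*K)*(b*t₀^((2:ℝ))) := by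
      rw [hΦdef]
      simp only
      rw [en, ep2]
      field_simp
      ring
    rw [hval]
    have h2 : 0 < t₀^((2:ℝ)) := rpow_pos_of_pos ht₀pos _
    have h3 : 0 < 4*(4-q) - p*(p-q)*K := by linarith [hKp2]
    have pB := mul_pos h3 (mul_pos hb h2)
    have pA := mul_pos (mul_pos (by norm_num : (0:ℝ) < 2) ha) h2q
    linarith [pA, pB]
  -- Φ negative for large t
  obtain ⟨R, hRdef⟩ : ∃ x : ℝ, x = (2*a*(2-q) + 4*b*(4-q))/(c*p*(p-q)) := ⟨_, rfl⟩
  have hR0 : 0 ≤ R := by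
    rw [hRdef]
    apply div_nonneg _ (by positivity)
    linarith [mul_pos ha h2q, mul_pos hb h4q]
  obtain ⟨Mφ, hMφdef⟩ : ∃ x : ℝ, x = max (max 2 (R^((p-4)⁻¹))) (t₀+1) := ⟨_, rfl⟩
  have hM2 : 2 ≤ Mφ := hMφdef ▸ le_trans (le_max_left _ _) (le_max_left _ _)
  have hMt₀ : t₀ < Mφ := by
    rw [hMφdef]; exact lt_of_lt_of_le (by linarith) (le_max_right _ _)
  have hMpos : 0 < Mφ := by linarith
  have hMR : R ≤ Mφ^(p-4) := by
    have h1 : R^((p-4)⁻¹) ≤ Mφ := hMφdef ▸ le_trans (le_max_right _ _) (le_max_left _ _)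
    calc R = (R^((p-4)⁻¹))^(p-4) := (Real.rpow_inv_rpow hR0 (ne_of_gt hp4)).symm
      _ ≤ Mφ^(p-4) := Real.rpow_le_rpow (Real.rpow_nonneg hR0 _) h1 hp4.le
  have hcpR : c*p*(p-q)*R = 2*a*(2-q) + 4*b*(4-q) := by
    rw [hRdef]; field_simp
  have hΦM : Φ Mφ < 0 := by
    have eM : Mφ^(p-2) = Mφ^(2:ℕ) * Mφ^(p-4) := by
      rw [show p-2 = ((2:ℕ):ℝ)+(p-4) by push_cast; ring, Real.rpow_add hMpos,
        Real.rpow_natCast]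
    have key : (2*a*(2-q) + 4*b*(4-q))*Mφ^(2:ℕ) ≤ c*p*(p-q)*Mφ^(p-2) := by
      rw [eM, ← hcpR]
      have h1 : c*p*(p-q)*R*Mφ^(2:ℕ) ≤ c*p*(p-q)*Mφ^(p-4)*Mφ^(2:ℕ) := by
        apply mul_le_mul_of_nonneg_right _ (by positivity)
        apply mul_le_mul_of_nonneg_left hMR (by positivity)
      linarith [h1]
    have hM4 : (4:ℝ) ≤ Mφ^(2:ℕ) := by
      have h22 : (2:ℝ)*2 ≤ Mφ*Mφ := mul_le_mul hM2 hM2 (by norm_num) (by linarith)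
      rw [pow_two]
      linarith [h22]
    have pA : 0 < 2*a*(2-q) := mul_pos (mul_pos (by norm_num : (0:ℝ) < 2) ha) h2q
    have hprod : 0 ≤ (2*a*(2-q))*(Mφ^(2:ℕ)-4) := mul_nonneg pA.le (by linarith [hM4])
    rw [hΦdef]
    simp only
    linarith [key, hprod, pA]
  -- obtain s, the zero of Φ
  obtain ⟨s, hsmem, hΦs⟩ := intermediate_value_Icc' hMt₀.le hΦcont.continuousOn
    (Set.mem_Icc.mpr ⟨hΦM.le, hΦt₀.le⟩)
  have hst₀ : t₀ < s := by
    rcases lt_or_eq_of_le hsmem.1 with h | h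
    · exact h
    · exfalso; rw [← h] at hΦs; exact (ne_of_gt hΦt₀) hΦs
  have hspos : 0 < s := ht₀pos.trans hst₀
  -- sign of Φ
  have hΦpos : ∀ x : ℝ, 0 < x → x < s → 0 < Φ x := by
    intro x hx hxs
    rcases le_or_gt x t₀ with h | h
    · have h1 := hΦmono (Set.mem_Icc.mpr ⟨le_refl 0, ht₀pos.le⟩)
        (Set.mem_Icc.mpr ⟨hx.le, h⟩) hx
      rw [hΦ0] at h1
      linarith [mul_pos ha h2q]
    · have h1 := hΦanti (Set.mem_Ici.mpr h.le) (Set.mem_Ici.mpr hsmem.1) hxs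
      rw [hΦs] at h1
      exact h1
  have hΦneg : ∀ x : ℝ, s < x → Φ x < 0 := by
    intro x hx
    have h1 := hΦanti (Set.mem_Ici.mpr hst₀.le) (Set.mem_Ici.mpr (hst₀.le.trans hx.le)) hx
    rw [hΦs] at h1
    exact h1
  -- g monotonicity
  have hgmono : ∀ x y : ℝ, 0 < x → x < y → y ≤ s → g x < g y := by
    intro x y hx hxy hys
    have H := strictMonoOn_of_deriv_pos (convex_Icc x y)
      (fun z hz => (hgcont z (ne_of_gt (lt_of_lt_of_le hx hz.1))).continuousWithinAt)
      (fun z hz => by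
        rw [interior_Icc] at hz
        have hz0 : 0 < z := hx.trans hz.1
        rw [(hgd z hz0).deriv]
        exact mul_pos (rpow_pos_of_pos hz0 _) (hΦpos z hz0 (lt_of_lt_of_le hz.2 hys)))
    exact H (Set.left_mem_Icc.mpr hxy.le) (Set.right_mem_Icc.mpr hxy.le) hxy
  have hganti : ∀ x y : ℝ, s ≤ x → x < y → g y < g x := by
    intro x y hsx hxy
    have hx : 0 < x := lt_of_lt_of_le hspos hsx
    have H := strictAntiOn_of_deriv_neg (convex_Icc x y)
      (fun z hz => (hgcont z (ne_of_gt (lt_of_lt_of_le hx hz.1))).continuousWithinAt)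
      (fun z hz => by
        rw [interior_Icc] at hz
        have hz0 : 0 < z := hx.trans hz.1
        rw [(hgd z hz0).deriv]
        exact mul_neg_of_pos_of_neg (rpow_pos_of_pos hz0 _)
          (hΦneg z (lt_of_le_of_lt hsx hz.1)))
    exact H (Set.left_mem_Icc.mpr hxy.le) (Set.right_mem_Icc.mpr hxy.le) hxy
  -- g at t₀
  have epq : t₀^(p-q) = (KA*Y)*(K*(b/c)) := by
    rw [show p-q = (4-q)+(p-4) by ring, Real.rpow_add ht₀pos, e4q, ep4]
  have hg0 : g t₀ = 2*a*(KG*X) + (4 - p*K)*(b*(KA*Y)) - d*q := by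
    rw [hgdef]
    simp only
    rw [e2q, e4q, epq]
    field_simp
    ring
  have hlin : q*(1-K) < 4-p*K := by linarith [hKpq]
  have hgt₀pos : 0 < g t₀ := by
    rw [hg0]
    have s1 : q*d < q*(KA*(1-K)*(a*X+b*Y)) := mul_lt_mul_of_pos_left hD hq0
    have c1 : q*(KA*(1-K)) < 2*KG := by
      have hpp := mul_pos h2q (mul_pos hKApos (show (0:ℝ) < 1-K by linarith))
      linarith [hGA, hpp]
    have c2 : q*(KA*(1-K)) ≤ (4-p*K)*KA := by
      have := mul_le_mul_of_nonneg_right hlin.le hKApos.le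
      linarith [this]
    have s2 : q*(KA*(1-K))*(a*X) ≤ 2*KG*(a*X) :=
      mul_le_mul_of_nonneg_right c1.le (by positivity)
    have s3 : q*(KA*(1-K))*(b*Y) ≤ (4-p*K)*KA*(b*Y) :=
      mul_le_mul_of_nonneg_right c2 (by positivity)
    linarith [s1, s2, s3]
  -- f at t₀ is positive
  have hft₀pos : 0 < a * t₀ ^ 2 + b * t₀ ^ 4 - c * t₀ ^ p - d * t₀ ^ q := by
    have eq2 : t₀^(2:ℕ) = t₀^q * (KG*X) := by
      rw [← Real.rpow_natCast t₀ 2, show ((2:ℕ):ℝ) = q + (2-q) by push_cast; ring,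
        Real.rpow_add ht₀pos, e2q]
    have eq4 : t₀^(4:ℕ) = t₀^q * (KA*Y) := by
      rw [← Real.rpow_natCast t₀ 4, show ((4:ℕ):ℝ) = q + (4-q) by push_cast; ring,
        Real.rpow_add ht₀pos, e4q]
    have eqp : t₀^p = (t₀^q * (KA*Y)) * (K*(b/c)) := by
      rw [show p = q+(p-q) by ring, Real.rpow_add ht₀pos, epq]; ring
    have hval : a * t₀ ^ 2 + b * t₀ ^ 4 - c * t₀ ^ p - d * t₀ ^ q
        = t₀^q * (a*(KG*X) + (1-K)*(b*(KA*Y)) - d) := by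
      rw [eq2, eq4, eqp]
      field_simp
      ring
    rw [hval]
    have hinner : 0 < a*(KG*X) + (1-K)*(b*(KA*Y)) - d := by
      have s2 : KA*(1-K)*(a*X) < KG*(a*X) :=
        mul_lt_mul_of_pos_right hGA (by positivity)
      linarith [hD, s2]
    exact mul_pos (rpow_pos_of_pos ht₀pos _) hinner
  -- g negative near zero
  have hDq : 0 < d*q/(2*a+4*b+1) := by positivity
  obtain ⟨δ, hδdef⟩ : ∃ x : ℝ, x = (d*q/(2*a+4*b+1))^((2-q)⁻¹) := ⟨_, rfl⟩
  have hδpos : 0 < δ := hδdef ▸ rpow_pos_of_pos hDq _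
  obtain ⟨ε, hεdef⟩ : ∃ x : ℝ, x = min (t₀/2) (min 1 δ) := ⟨_, rfl⟩
  have hεpos : 0 < ε := by
    rw [hεdef]; exact lt_min (by positivity) (lt_min one_pos hδpos)
  have hεt₀ : ε < t₀ := by
    rw [hεdef]; exact lt_of_le_of_lt (min_le_left _ _) (by linarith)
  have hε1 : ε ≤ 1 := by
    rw [hεdef]; exact le_trans (min_le_right _ _) (min_le_left _ _)
  have hεδ : ε ≤ δ := by
    rw [hεdef]; exact le_trans (min_le_right _ _) (min_le_right _ _)
  have h2qε : ε^(2-q) ≤ d*q/(2*a+4*b+1) := by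
    calc ε^(2-q) ≤ δ^(2-q) := Real.rpow_le_rpow hεpos.le hεδ h2q.le
      _ = d*q/(2*a+4*b+1) := by
          rw [hδdef]; exact Real.rpow_inv_rpow hDq.le (ne_of_gt h2q)
  have h4qε : ε^(4-q) ≤ ε^(2-q) :=
    Real.rpow_le_rpow_of_exponent_ge hεpos hε1 (by linarith)
  have hgε : g ε < 0 := by
    rw [hgdef]
    simp only
    have hpow : 0 < c*p*ε^(p-q) := by positivity
    have hfrac : (2*a+4*b+1) * (d*q/(2*a+4*b+1)) = d*q :=
      mul_div_cancel₀ _ (by positivity)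
    linarith [hpow, hfrac, hDq,
      mul_le_mul_of_nonneg_left h2qε (by linarith : (0:ℝ) ≤ 2*a),
      mul_le_mul_of_nonneg_left (h4qε.trans h2qε) (by linarith : (0:ℝ) ≤ 4*b)]
  -- obtain t₁
  obtain ⟨t₁, ht₁mem, hgt₁⟩ := intermediate_value_Icc hεt₀.le
    (fun z hz => (hgcont z (ne_of_gt (lt_of_lt_of_le hεpos hz.1))).continuousWithinAt)
    (Set.mem_Icc.mpr ⟨hgε.le, hgt₀pos.le⟩)
  have ht₁pos : 0 < t₁ := lt_of_lt_of_le hεpos ht₁mem.1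
  have ht₁t₀ : t₁ < t₀ := by
    rcases lt_or_eq_of_le ht₁mem.2 with h | h
    · exact h
    · exfalso; rw [h] at hgt₁; exact (ne_of_gt hgt₀pos) hgt₁
  have ht₁s : t₁ < s := ht₁t₀.trans hst₀
  -- g negative for large t
  obtain ⟨R₂, hR₂def⟩ : ∃ x : ℝ, x = (2*a+4*b)/(c*p) := ⟨_, rfl⟩
  have hR₂0 : 0 ≤ R₂ := by rw [hR₂def]; positivity
  obtain ⟨M₂, hM₂def⟩ : ∃ x : ℝ, x = max (s+1) (max 1 (R₂^((p-4)⁻¹))) := ⟨_, rfl⟩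
  have hM₂s : s < M₂ := by
    rw [hM₂def]; exact lt_of_lt_of_le (by linarith) (le_max_left _ _)
  have hM₂1 : 1 ≤ M₂ := hM₂def ▸ le_trans (le_max_left _ _) (le_max_right _ _)
  have hM₂pos : 0 < M₂ := by linarith
  have hM₂R : R₂ ≤ M₂^(p-4) := by
    have h1 : R₂^((p-4)⁻¹) ≤ M₂ := hM₂def ▸ le_trans (le_max_right _ _) (le_max_right _ _)
    calc R₂ = (R₂^((p-4)⁻¹))^(p-4) := (Real.rpow_inv_rpow hR₂0 (ne_of_gt hp4)).symm
      _ ≤ M₂^(p-4) := Real.rpow_le_rpow (Real.rpow_nonneg hR₂0 _) h1 hp4.le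
  have hcpR₂ : c*p*R₂ = 2*a+4*b := by rw [hR₂def]; field_simp
  have hgM₂ : g M₂ < 0 := by
    have e4 : M₂^(4-q) = M₂^(2-q) * M₂^((2:ℝ)) := by
      rw [← Real.rpow_add hM₂pos, show 2-q+(2:ℝ) = 4-q by ring]
    have epq2 : M₂^(p-q) = M₂^(2-q) * M₂^((2:ℝ)) * M₂^(p-4) := by
      rw [← Real.rpow_add hM₂pos, ← Real.rpow_add hM₂pos,
        show 2-q+(2:ℝ)+(p-4) = p-q by ring]
    have hM₂sq : (1:ℝ) ≤ M₂^((2:ℝ)) := by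
      calc (1:ℝ) = 1^((2:ℝ)) := (Real.one_rpow _).symm
        _ ≤ M₂^((2:ℝ)) := Real.rpow_le_rpow zero_le_one hM₂1 (by norm_num)
    have h2qM : 0 < M₂^(2-q) := rpow_pos_of_pos hM₂pos _
    have hinner : 2*a + 4*b*M₂^((2:ℝ)) - c*p*(M₂^((2:ℝ))*M₂^(p-4)) ≤ 0 := by
      have h1 : c*p*R₂*M₂^((2:ℝ)) ≤ c*p*M₂^(p-4)*M₂^((2:ℝ)) := by
        apply mul_le_mul_of_nonneg_right _ (by positivity)
        apply mul_le_mul_of_nonneg_left hM₂R (by positivity)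
      rw [hcpR₂] at h1
      have hp2a : 0 ≤ 2*a*(M₂^((2:ℝ))-1) := mul_nonneg (by linarith) (by linarith [hM₂sq])
      linarith [h1, hp2a]
    have hval : g M₂ = M₂^(2-q) * (2*a + 4*b*M₂^((2:ℝ)) - c*p*(M₂^((2:ℝ))*M₂^(p-4))) - d*q := by
      rw [hgdef]
      simp only
      rw [e4, epq2]
      ring
    rw [hval]
    have hmn := mul_nonpos_of_nonneg_of_nonpos h2qM.le hinner
    linarith [hmn, mul_pos hd hq0]
  -- obtain t₂
  have hgspos : 0 < g s := lt_trans hgt₀pos (hgmono t₀ s ht₀pos hst₀ (le_refl s))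
  obtain ⟨t₂, ht₂mem, hgt₂⟩ := intermediate_value_Icc' hM₂s.le
    (fun z hz => (hgcont z (ne_of_gt (lt_of_lt_of_le hspos hz.1))).continuousWithinAt)
    (Set.mem_Icc.mpr ⟨hgM₂.le, hgspos.le⟩)
  have hst₂ : s < t₂ := by
    rcases lt_or_eq_of_le ht₂mem.1 with h | h
    · exact h
    · exfalso; rw [← h] at hgt₂; exact (ne_of_gt hgspos) hgt₂
  have ht₁t₂ : t₁ < t₂ := ht₁s.trans hst₂
  have ht₀t₂ : t₀ < t₂ := hst₀.trans hst₂
  -- sign of g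
  have hgneg1 : ∀ t : ℝ, 0 < t → t < t₁ → g t < 0 := by
    intro t ht h
    have h2 := hgmono t t₁ ht h ht₁s.le
    rw [hgt₁] at h2
    exact h2
  have hgpos : ∀ t : ℝ, t₁ < t → t < t₂ → 0 < g t := by
    intro t h1 h2
    rcases le_or_gt t s with h | h
    · have h3 := hgmono t₁ t ht₁pos h1 h
      rw [hgt₁] at h3
      exact h3
    · have h3 := hganti t t₂ h.le h2
      rw [hgt₂] at h3
      exact h3
  have hgneg2 : ∀ t : ℝ, t₂ < t → g t < 0 := by
    intro t h
    have h2 := hganti t₂ t hst₂.le h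
    rw [hgt₂] at h2
    exact h2
  -- conclusion
  have hcontF := stmt1_contf a b c d p q hp0 hq0
  have hA : StrictAntiOn (fun t => a * t ^ 2 + b * t ^ 4 - c * t ^ p - d * t ^ q)
      (Set.Icc 0 t₁) := by
    apply strictAntiOn_of_deriv_neg (convex_Icc _ _) hcontF.continuousOn
    intro x hx
    rw [interior_Icc] at hx
    rw [hFd x hx.1]
    exact mul_neg_of_pos_of_neg (rpow_pos_of_pos hx.1 _) (hgneg1 x hx.1 hx.2)
  have hM : StrictMonoOn (fun t => a * t ^ 2 + b * t ^ 4 - c * t ^ p - d * t ^ q)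
      (Set.Icc t₁ t₂) := by
    apply strictMonoOn_of_deriv_pos (convex_Icc _ _) hcontF.continuousOn
    intro x hx
    rw [interior_Icc] at hx
    rw [hFd x (ht₁pos.trans hx.1)]
    exact mul_pos (rpow_pos_of_pos (ht₁pos.trans hx.1) _) (hgpos x hx.1 hx.2)
  refine ⟨t₁, t₂, ht₁pos, ht₁t₂, hA, hM, ?_, ?_, ?_, ?_⟩
  · apply strictAntiOn_of_deriv_neg (convex_Ici _) hcontF.continuousOn
    intro x hx
    rw [interior_Ici] at hx
    have hx0 : 0 < x := (ht₁pos.trans ht₁t₂).trans hx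
    rw [hFd x hx0]
    exact mul_neg_of_pos_of_neg (rpow_pos_of_pos hx0 _) (hgneg2 x hx)
  · -- f t₁ < 0
    have hF0 : a * (0:ℝ) ^ 2 + b * (0:ℝ) ^ 4 - c * (0:ℝ) ^ p - d * (0:ℝ) ^ q = 0 := by
      rw [Real.zero_rpow (ne_of_gt hp0), Real.zero_rpow (ne_of_gt hq0)]
      ring
    have h1 := hA (Set.mem_Icc.mpr ⟨le_refl 0, ht₁pos.le⟩)
      (Set.mem_Icc.mpr ⟨ht₁pos.le, le_refl t₁⟩) ht₁pos
    simp only at h1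
    rw [hF0] at h1
    exact h1
  · -- 0 < f t₂
    have h1 := hM (Set.mem_Icc.mpr ⟨ht₁t₀.le, ht₀t₂.le⟩)
      (Set.mem_Icc.mpr ⟨ht₁t₂.le, le_refl t₂⟩) ht₀t₂
    exact lt_trans hft₀pos h1
  · -- critical points
    intro t ht
    rw [hFd t ht]
    constructor
    · intro h
      have hgt : g t = 0 := by
        rcases mul_eq_zero.mp h with h' | h'
        · exact absurd h' (ne_of_gt (rpow_pos_of_pos ht _))
        · exact h'
      by_contra hcon
      push_neg at hcon
      obtain ⟨h1, h2⟩ := hcon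
      rcases lt_trichotomy t t₁ with h3 | h3 | h3
      · exact (ne_of_lt (hgneg1 t ht h3)) hgt
      · exact h1 h3
      · rcases lt_trichotomy t t₂ with h4 | h4 | h4
        · exact (ne_of_gt (hgpos t h3 h4)) hgt
        · exact h2 h4
        · exact (ne_of_lt (hgneg2 t h4)) hgt
    · rintro (rfl | rfl)
      · rw [hgt₁, mul_zero]
      · rw [hgt₂, mul_zero]
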